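/- For every n ≥ 1 there exists a bijection f from the set of noncrossing partitions of [n] onto the set of 132-avoiding permutations of [n] such that for every noncrossing partition π and every i with 1 ≤ i ≤ n−1: i ∈ Des(f(π)) if and only if i+1 is the smallest element of the block of π containing it. -/
import Mathlib


/-- A permutation `p` of `[n]` (0-based `Fin n`) is 132-avoiding if there are
no positions `a < b < c` with `p a < p c < p b`. -/
def Avoids132 {n : ℕ} (p : Equiv.Perm (Fin n)) : Prop :=
  ∀ a b c : Fin n, a < b → b < c → ¬ (p a < p c ∧ p c < p b)

/-- The descent set of `p`, as a set of 1-based positions `i ∈ [n-1]`: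
`i` is a descent iff `p(i) > p(i+1)`, i.e. (0-based) `p ⟨i-1⟩ > p ⟨i⟩`. -/
def Des {n : ℕ} (p : Equiv.Perm (Fin n)) : Set ℕ :=
  {i | ∃ h : 1 ≤ i ∧ i < n,
        p ⟨i, h.2⟩ < p ⟨i - 1, Nat.lt_of_le_of_lt (Nat.sub_le i 1) h.2⟩}

/-- A set partition of `[n]` (encoded as a setoid on `Fin n`, with element
`e : Fin n` representing `e+1 ∈ [n]`) is noncrossing if there are no
`a < b < c < d` with `a, c` in one block and `b, d` in a different block. -/
def IsNoncrossing {n : ℕ} (r : Setoid (Fin n)) : Prop :=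
  ¬ ∃ a b c d : Fin n, a < b ∧ b < c ∧ c < d ∧ r.r a c ∧ r.r b d ∧ ¬ r.r a b

noncomputable section
attribute [local instance] Classical.propDecidable

namespace NC132

variable {n : ℕ}

/-- The common encoding: `m j` is the minimum of the block of `j`. -/
def Cond (m : Fin n → Fin n) : Prop :=
  (∀ j, m j ≤ j) ∧ (∀ j, m (m j) = m j) ∧
    ∀ i j : Fin n, i < j → m j ≤ i → m j ≤ m i

/-! ### Partition side -/

def blk (r : Setoid (Fin n)) (j : Fin n) : Finset (Fin n) :=
  Finset.univ.filter fun k => r.r j k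

lemma mem_blk {r : Setoid (Fin n)} {j k : Fin n} : k ∈ blk r j ↔ r.r j k := by
  simp [blk]

lemma blk_nonempty (r : Setoid (Fin n)) (j : Fin n) : (blk r j).Nonempty :=
  ⟨j, mem_blk.2 (r.iseqv.refl j)⟩

def minb (r : Setoid (Fin n)) (j : Fin n) : Fin n :=
  (blk r j).min' (blk_nonempty r j)

lemma rel_minb (r : Setoid (Fin n)) (j : Fin n) : r.r j (minb r j) :=
  mem_blk.1 ((blk r j).min'_mem _)

lemma minb_le_of_rel {r : Setoid (Fin n)} {j k : Fin n} (h : r.r j k) :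
    minb r j ≤ k :=
  Finset.min'_le _ _ (mem_blk.2 h)

lemma minb_le (r : Setoid (Fin n)) (j : Fin n) : minb r j ≤ j :=
  minb_le_of_rel (r.iseqv.refl j)

lemma minb_congr {r : Setoid (Fin n)} {i j : Fin n} (h : r.r i j) :
    minb r i = minb r j := by
  apply le_antisymm
  · exact minb_le_of_rel (r.iseqv.trans h (rel_minb r j))
  · exact minb_le_of_rel (r.iseqv.trans (r.iseqv.symm h) (rel_minb r i))

lemma cond_minb {r : Setoid (Fin n)} (hr : IsNoncrossing r) : Cond (minb r) := by
  refine ⟨minb_le r, fun j => minb_congr (r.iseqv.symm (rel_minb r j)), ?_⟩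
  intro i j hij hji
  by_contra hlt
  push_neg at hlt
  set a := minb r i with ha
  set b := minb r j with hb
  have hab : ¬ r.r a b := by
    intro hab
    have : a = b := by
      rw [ha, hb]
      calc minb r i = minb r a := (minb_congr (r.iseqv.symm (rel_minb r i))).symm
        _ = minb r b := minb_congr hab
        _ = minb r j := minb_congr (r.iseqv.symm (rel_minb r j))
    exact absurd this (ne_of_lt hlt)
  rcases lt_or_eq_of_le hji with hbi | hbi
  · exact hr ⟨a, b, i, j, hlt, hbi, hij, r.iseqv.symm (rel_minb r i),
      r.iseqv.symm (rel_minb r j), hab⟩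
  · -- b = i : then r b j so r a b via r a i
    have hri : r.r i j := by
      have : r.r b j := r.iseqv.symm (rel_minb r j)
      rwa [hbi] at this
    have : r.r a b := by
      rw [hbi]
      exact r.iseqv.symm (rel_minb r i)
    exact hab this

def kerS (m : Fin n → Fin n) : Setoid (Fin n) :=
  ⟨fun a b => m a = m b, ⟨fun _ => rfl, Eq.symm, Eq.trans⟩⟩

lemma kerS_r {m : Fin n → Fin n} {a b : Fin n} : (kerS m).r a b ↔ m a = m b :=
  Iff.rfl

lemma kerS_nc {m : Fin n → Fin n} (hm : Cond m) : IsNoncrossing (kerS m) := by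
  rintro ⟨a, b, c, d, hab, hbc, hcd, hac, hbd, hnab⟩
  obtain ⟨h1, _, h3⟩ := hm
  rw [kerS_r] at hac hbd hnab
  have h4 : m c ≤ b := by
    rw [← hac]; exact le_trans (h1 a) (le_of_lt hab)
  have h5 : m c ≤ m b := h3 b c hbc h4
  have h6 : m d ≤ c := by
    rw [← hbd]; exact le_trans (h1 b) (le_of_lt hbc)
  have h7 : m d ≤ m c := h3 c d hcd h6
  rw [← hbd] at h7
  exact hnab (by rw [hac]; exact le_antisymm h5 h7)

lemma kerS_minb (r : Setoid (Fin n)) : kerS (minb r) = r := by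
  apply Setoid.ext
  intro a b
  rw [kerS_r]
  constructor
  · intro h
    exact r.iseqv.trans (rel_minb r a) (r.iseqv.symm (h ▸ rel_minb r b))
  · exact minb_congr

lemma minb_kerS {m : Fin n → Fin n} (hm : Cond m) : minb (kerS m) = m := by
  funext j
  apply le_antisymm
  · apply Finset.min'_le
    rw [mem_blk, kerS_r]
    exact (hm.2.1 j).symm
  · apply Finset.le_min'
    intro k hk
    rw [mem_blk, kerS_r] at hk
    exact hk ▸ hm.1 k

/-! ### Permutation side -/

def R (m : Fin n → Fin n) (k j : Fin n) : Prop :=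
  (k < j ∧ m j ≤ k) ∨ (j < k ∧ j < m k)

lemma R_irrefl (m : Fin n → Fin n) (j : Fin n) : ¬ R m j j := by
  simp [R]

lemma R_total {m : Fin n → Fin n} {k j : Fin n} (h : k ≠ j) :
    R m k j ∨ R m j k := by
  rcases lt_or_gt_of_ne h with hkj | hjk
  · rcases le_or_gt (m j) k with h' | h'
    · exact Or.inl (Or.inl ⟨hkj, h'⟩)
    · exact Or.inr (Or.inr ⟨hkj, h'⟩)
  · rcases le_or_gt (m k) j with h' | h'
    · exact Or.inr (Or.inl ⟨hjk, h'⟩)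
    · exact Or.inl (Or.inr ⟨hjk, h'⟩)

lemma R_asymm {m : Fin n → Fin n} {k j : Fin n} (h : R m k j) : ¬ R m j k := by
  rintro (⟨h1, h2⟩ | ⟨h1, h2⟩) <;> rcases h with (⟨h3, h4⟩ | ⟨h3, h4⟩)
  · exact absurd h1 (lt_asymm h3)
  · exact absurd h2 (not_le.2 h4)
  · exact absurd h2 (not_lt.2 h4)
  · exact absurd h1 (lt_asymm h3)

lemma R_trans {m : Fin n → Fin n} (hm : Cond m) {x y z : Fin n} :
    R m x y → R m y z → R m x z := by
  obtain ⟨h1, _, h3⟩ := hm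
  rintro (⟨hxy, hmy⟩ | ⟨hyx, hymx⟩) (⟨hyz, hmz⟩ | ⟨hzy, hzmy⟩)
  · exact Or.inl ⟨hxy.trans hyz, le_trans (h3 y z hyz hmz) hmy⟩
  · exact Or.inr ⟨lt_of_lt_of_le hzmy hmy, lt_of_lt_of_le hzmy (h3 x y hxy hmy)⟩
  · rcases lt_trichotomy x z with h | h | h
    · exact Or.inl ⟨h, le_trans hmz (le_of_lt hyx)⟩
    · exact absurd (show m x ≤ y by rw [h]; exact hmz) (not_le.2 hymx)
    · refine Or.inr ⟨h, ?_⟩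
      by_contra hc
      push_neg at hc
      exact absurd (le_trans (h3 z x h hc) hmz) (not_le.2 hymx)
  · exact Or.inr ⟨hzy.trans hyx, hzy.trans hymx⟩

def rkSet (m : Fin n → Fin n) (j : Fin n) : Finset (Fin n) :=
  Finset.univ.filter fun k => R m k j

lemma rkSet_card_lt (m : Fin n → Fin n) (j : Fin n) : (rkSet m j).card < n := by
  have hss : rkSet m j ⊂ Finset.univ := by
    rw [Finset.ssubset_iff_of_subset (Finset.subset_univ _)]
    exact ⟨j, Finset.mem_univ j, by simp [rkSet, R_irrefl]⟩
  simpa using Finset.card_lt_card hss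

def rk (m : Fin n → Fin n) (j : Fin n) : Fin n :=
  ⟨(rkSet m j).card, rkSet_card_lt m j⟩

lemma rk_strict {m : Fin n → Fin n} (hm : Cond m) {k j : Fin n} (h : R m k j) :
    rk m k < rk m j := by
  have hk : k ∉ rkSet m k := by simp [rkSet, R_irrefl]
  have hsub : insert k (rkSet m k) ⊆ rkSet m j := by
    intro x hx
    rcases Finset.mem_insert.1 hx with rfl | hx
    · simp only [rkSet, Finset.mem_filter, Finset.mem_univ, true_and]
      exact h
    · simp only [rkSet, Finset.mem_filter, Finset.mem_univ, true_and] at hx ⊢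
      exact R_trans hm hx h
  have := Finset.card_le_card hsub
  rw [Finset.card_insert_of_notMem hk] at this
  exact Nat.lt_of_lt_of_le (Nat.lt_succ_self _) this

lemma rk_lt_iff {m : Fin n → Fin n} (hm : Cond m) {k j : Fin n} :
    rk m k < rk m j ↔ R m k j := by
  constructor
  · intro h
    by_contra hc
    rcases eq_or_ne k j with rfl | hne
    · exact lt_irrefl _ h
    · rcases R_total hne with hR | hR
      · exact hc hR
      · exact absurd (rk_strict hm hR) (lt_asymm h)
  · exact rk_strict hm

lemma rk_injective {m : Fin n → Fin n} (hm : Cond m) :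
    Function.Injective (rk m) := by
  intro k j h
  by_contra hne
  rcases R_total hne with hR | hR
  · exact absurd h (ne_of_lt (rk_strict hm hR))
  · exact absurd h.symm (ne_of_lt (rk_strict hm hR))

def permOf (m : Fin n → Fin n) (hm : Cond m) : Equiv.Perm (Fin n) :=
  Equiv.ofBijective (rk m) (Finite.injective_iff_bijective.1 (rk_injective hm))

lemma permOf_apply {m : Fin n → Fin n} (hm : Cond m) (j : Fin n) :
    permOf m hm j = rk m j := rfl

lemma permOf_avoids {m : Fin n → Fin n} (hm : Cond m) :
    Avoids132 (permOf m hm) := by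
  rintro a b c hab hbc ⟨h1, h2⟩
  rw [permOf_apply, permOf_apply] at h1 h2
  have hac := (rk_lt_iff hm).1 h1
  rcases hac with ⟨_, hma⟩ | ⟨h, _⟩
  · have hRbc : R m b c := Or.inl ⟨hbc, le_trans hma (le_of_lt hab)⟩
    exact absurd (rk_strict hm hRbc) (lt_asymm h2)
  · exact absurd h (lt_asymm (hab.trans hbc))

/-! ### From a permutation back to the encoding -/

def mSet (p : Equiv.Perm (Fin n)) (j : Fin n) : Finset (Fin n) :=
  Finset.univ.filter fun i => ∀ k, i ≤ k → k ≤ j → p k ≤ p j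

lemma self_mem_mSet (p : Equiv.Perm (Fin n)) (j : Fin n) : j ∈ mSet p j := by
  simp only [mSet, Finset.mem_filter, Finset.mem_univ, true_and]
  intro k h1 h2
  have : k = j := le_antisymm h2 h1
  rw [this]

def mOf (p : Equiv.Perm (Fin n)) (j : Fin n) : Fin n :=
  (mSet p j).min' ⟨j, self_mem_mSet p j⟩

lemma mOf_le (p : Equiv.Perm (Fin n)) (j : Fin n) : mOf p j ≤ j :=
  Finset.min'_le _ _ (self_mem_mSet p j)

lemma mOf_prop (p : Equiv.Perm (Fin n)) (j : Fin n) :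
    ∀ k, mOf p j ≤ k → k ≤ j → p k ≤ p j := by
  have := (mSet p j).min'_mem ⟨j, self_mem_mSet p j⟩
  simpa [mSet, mOf] using this

lemma mOf_min {p : Equiv.Perm (Fin n)} {j i : Fin n}
    (h : ∀ k, i ≤ k → k ≤ j → p k ≤ p j) : mOf p j ≤ i := by
  apply Finset.min'_le
  simp only [mSet, Finset.mem_filter, Finset.mem_univ, true_and]
  exact h

lemma cond_mOf (p : Equiv.Perm (Fin n)) : Cond (mOf p) := by
  refine ⟨mOf_le p, ?_, ?_⟩
  · intro j
    set b := mOf p j with hb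
    apply le_antisymm (mOf_le p b)
    by_contra hc
    push_neg at hc
    have hmem : mOf p b ∈ mSet p j := by
      simp only [mSet, Finset.mem_filter, Finset.mem_univ, true_and]
      intro k hk1 hk2
      rcases le_or_gt k b with hkb | hkb
      · exact le_trans (mOf_prop p b k hk1 hkb) (mOf_prop p j b (le_refl b) (mOf_le p j))
      · exact mOf_prop p j k (le_of_lt hkb) hk2
    exact absurd (Finset.min'_le _ _ hmem) (not_le.2 hc)
  · intro i j hij hji
    by_contra hc
    push_neg at hc
    have hmem : mOf p i ∈ mSet p j := by
      simp only [mSet, Finset.mem_filter, Finset.mem_univ, true_and]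
      intro k hk1 hk2
      rcases le_or_gt k i with hki | hki
      · exact le_trans (mOf_prop p i k hk1 hki)
          (mOf_prop p j i hji (le_of_lt hij))
      · exact mOf_prop p j k (le_trans hji (le_of_lt hki)) hk2
    exact absurd (Finset.min'_le _ _ hmem) (not_le.2 hc)

lemma mOf_lt_iff {p : Equiv.Perm (Fin n)} (hp : Avoids132 p) {k j : Fin n}
    (hkj : k < j) : p k < p j ↔ mOf p j ≤ k := by
  constructor
  · intro h
    by_contra hc
    push_neg at hc
    have hk : k ∉ mSet p j := fun hm => absurd (Finset.min'_le _ _ hm) (not_le.2 hc)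
    simp only [mSet, Finset.mem_filter, Finset.mem_univ, true_and, not_forall] at hk
    obtain ⟨l, hkl, hlj, hjl⟩ := hk
    push_neg at hjl
    have hlj' : l < j := lt_of_le_of_ne hlj (by rintro rfl; exact lt_irrefl _ hjl)
    have hkl' : k < l := lt_of_le_of_ne hkl (by rintro rfl; exact lt_asymm h hjl)
    exact hp k l j hkl' hlj' ⟨h, hjl⟩
  · intro h
    have hle := mOf_prop p j k h (le_of_lt hkj)
    exact lt_of_le_of_ne hle fun e => absurd (p.injective e) (ne_of_lt hkj)

lemma R_mOf_iff {p : Equiv.Perm (Fin n)} (hp : Avoids132 p) {k j : Fin n} :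
    R (mOf p) k j ↔ p k < p j := by
  rcases lt_trichotomy k j with h | rfl | h
  · rw [mOf_lt_iff hp h]
    constructor
    · rintro (⟨_, h2⟩ | ⟨h1, _⟩)
      · exact h2
      · exact absurd h1 (lt_asymm h)
    · exact fun h2 => Or.inl ⟨h, h2⟩
  · simp [R_irrefl]
  · rw [show (p k < p j) ↔ ¬ (p j < p k) from
      ⟨lt_asymm, fun hc => lt_of_le_of_ne (not_lt.1 hc)
        fun e => absurd (p.injective e) (ne_of_lt h).symm⟩]
    rw [mOf_lt_iff hp h]
    constructor
    · rintro (⟨h1, _⟩ | ⟨_, h2⟩)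
      · exact absurd h1 (lt_asymm h)
      · exact fun hc => absurd h2 (not_lt.2 hc)
    · intro hc
      exact Or.inr ⟨h, not_le.1 hc⟩

lemma card_lt_val (p : Equiv.Perm (Fin n)) (j : Fin n) :
    (Finset.univ.filter fun k => p k < p j).card = (p j : ℕ) := by
  have : (Finset.univ.filter fun k => p k < p j) =
      (Finset.Iio (p j)).image p.symm := by
    ext x
    simp only [Finset.mem_filter, Finset.mem_univ, true_and, Finset.mem_image,
      Finset.mem_Iio]
    constructor
    · intro h
      exact ⟨p x, h, p.symm_apply_apply x⟩
    · rintro ⟨v, hv, rfl⟩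
      rwa [p.apply_symm_apply]
  rw [this, Finset.card_image_of_injective _ p.symm.injective, Fin.card_Iio]

lemma mOf_permOf {m : Fin n → Fin n} (hm : Cond m) : mOf (permOf m hm) = m := by
  funext j
  set p := permOf m hm with hp
  apply le_antisymm
  · apply mOf_min
    intro k h1 h2
    rcases eq_or_lt_of_le h2 with rfl | h2'
    · exact le_refl _
    · exact le_of_lt ((rk_lt_iff hm).2 (Or.inl ⟨h2', h1⟩))
  · apply Finset.le_min'
    intro i hi
    simp only [mSet, Finset.mem_filter, Finset.mem_univ, true_and] at hi
    by_contra hc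
    push_neg at hc
    have hij : i < j := lt_of_lt_of_le hc (hm.1 j)
    have hle : p i ≤ p j := hi i (le_refl i) (le_of_lt hij)
    have hlt : p i < p j :=
      lt_of_le_of_ne hle fun e => absurd (p.injective e) (ne_of_lt hij)
    rcases (rk_lt_iff hm).1 hlt with ⟨_, h⟩ | ⟨h, _⟩
    · exact absurd h (not_le.2 hc)
    · exact absurd h (lt_asymm hij)

lemma permOf_mOf {p : Equiv.Perm (Fin n)} (hp : Avoids132 p) :
    permOf (mOf p) (cond_mOf p) = p := by
  apply Equiv.ext
  intro j
  rw [permOf_apply]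
  apply Fin.ext
  show (rkSet (mOf p) j).card = (p j : ℕ)
  rw [show rkSet (mOf p) j = Finset.univ.filter fun k => p k < p j by
    apply Finset.filter_congr
    intro k _
    first
      | exact R_mOf_iff hp
      | exact propext (R_mOf_iff hp)]
  exact card_lt_val p j

/-! ### The two equivalences -/

def equivA : {r : Setoid (Fin n) // IsNoncrossing r} ≃
    {m : Fin n → Fin n // Cond m} where
  toFun r := ⟨minb r.1, cond_minb r.2⟩
  invFun m := ⟨kerS m.1, kerS_nc m.2⟩
  left_inv r := Subtype.ext (kerS_minb r.1)
  right_inv m := Subtype.ext (minb_kerS m.2)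

def equivB : {m : Fin n → Fin n // Cond m} ≃
    {p : Equiv.Perm (Fin n) // Avoids132 p} where
  toFun m := ⟨permOf m.1 m.2, permOf_avoids m.2⟩
  invFun p := ⟨mOf p.1, cond_mOf p.1⟩
  left_inv m := Subtype.ext (mOf_permOf m.2)
  right_inv p := Subtype.ext (permOf_mOf p.2)

end NC132

/-- There is a bijection `f` from noncrossing partitions of `[n]` to
132-avoiding permutations of `[n]` such that for `1 ≤ i ≤ n-1`,
`i ∈ Des (f π)` iff the element `i+1` (represented 0-based by `⟨i, _⟩`)
is the smallest element of its block of `π`. -/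
theorem stmt1 (n : ℕ) (hn : 1 ≤ n) :
    ∃ f : {r : Setoid (Fin n) // IsNoncrossing r} ≃
          {p : Equiv.Perm (Fin n) // Avoids132 p},
      ∀ π : {r : Setoid (Fin n) // IsNoncrossing r},
        ∀ i : ℕ, (h : 1 ≤ i ∧ i < n) →
          (i ∈ Des (f π).1 ↔
            ∀ j : Fin n, π.1.r ⟨i, h.2⟩ j → (⟨i, h.2⟩ : Fin n) ≤ j) := by
  classical
  refine ⟨NC132.equivA.trans NC132.equivB, ?_⟩
  intro π i h
  set m := NC132.minb π.1 with hmdef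
  have hcond : NC132.Cond m := NC132.cond_minb π.2
  have h0 : 1 ≤ i := h.1
  set I : Fin n := ⟨i, h.2⟩ with hI
  set I' : Fin n := ⟨i - 1, Nat.lt_of_le_of_lt (Nat.sub_le i 1) h.2⟩ with hI'
  have hII : I' < I := by
    simp only [Fin.lt_def, hI, hI']
    omega
  have hp : ((NC132.equivA.trans NC132.equivB) π).1 = NC132.permOf m hcond := rfl
  have hDes : i ∈ Des ((NC132.equivA.trans NC132.equivB) π).1 ↔
      NC132.permOf m hcond I < NC132.permOf m hcond I' := by
    rw [hp]
    constructor
    · rintro ⟨h', hlt⟩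
      exact hlt
    · intro hlt
      exact ⟨h, hlt⟩
  rw [hDes]
  rw [NC132.permOf_apply, NC132.permOf_apply, NC132.rk_lt_iff hcond]
  have hR : NC132.R m I I' ↔ I' < m I := by
    constructor
    · rintro (⟨h1, _⟩ | ⟨_, h2⟩)
      · exact absurd h1 (lt_asymm hII)
      · exact h2
    · exact fun h2 => Or.inr ⟨hII, h2⟩
  rw [hR]
  have hmin : I' < m I ↔ m I = I := by
    constructor
    · intro hlt
      have h1 : (m I : ℕ) ≤ (I : ℕ) := hcond.1 I
      have h2 : (I' : ℕ) < (m I : ℕ) := hlt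
      have e1 : (I : ℕ) = i := rfl
      have e2 : (I' : ℕ) = i - 1 := rfl
      apply Fin.ext
      omega
    · intro he
      rw [he]
      exact hII
  rw [hmin]
  constructor
  · intro he j hj
    have := NC132.minb_le_of_rel hj
    rw [← hmdef] at this
    rwa [he] at this
  · intro hall
    apply le_antisymm
    · exact hcond.1 I
    · exact hall _ (NC132.rel_minb π.1 I)

end
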